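/- For every α ∈ ℕ^N and β ∈ {0,1}^N with |β| = m−1, the differential of the twisted complex satisfies d*_m(x^α ⊗ (x*)^{∧β}) = Σ_{i=1}^N Ω_g(α, β, i) · x^{α+[i]} ⊗ (x*)^{∧(β+[i])}. Consequently the complex (A ⊗ ∧^•(V*), d*) decomposes as the direct sum, over γ ∈ (ℕ ∪ {−1})^N, of the subcomplexes K_{g,γ}^•, where K_{g,γ}^m is the k-span of {x^α ⊗ (x*)^{∧β} : α ∈ ℕ^N, β ∈ {0,1}^N, |β| = m, α − β = γ}. -/

import Mathlib

set_option synthInstance.maxHeartbeats 1000000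
set_option maxHeartbeats 1000000

attribute [local instance] Classical.propDecidable

noncomputable section

open scoped TensorProduct

section QSA
variable (k : Type) [Field k] (N : ℕ) (q : Fin N → Fin N → k)

/-- The commutation relations of the quantum symmetric algebra. -/
inductive QRel : FreeAlgebra k (Fin N) → FreeAlgebra k (Fin N) → Prop
  | rel (i j : Fin N) : QRel (FreeAlgebra.ι k i * FreeAlgebra.ι k j)
      (q i j • (FreeAlgebra.ι k j * FreeAlgebra.ι k i))

/-- The quantum symmetric algebra `A = S_q(V)`. -/
abbrev QSA := RingQuot (QRel k N q)

/-- The generator `x_i` of `S_q(V)`. -/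
def X (i : Fin N) : QSA k N q := RingQuot.mkAlgHom k (QRel k N q) (FreeAlgebra.ι k i)

/-- The ordered monomial `x^α = x_1^{α_1} ⋯ x_N^{α_N}`. -/
def xpow (α : Fin N → ℕ) : QSA k N q := (List.ofFn fun i => X k N q i ^ α i).prod

end QSA

section Twisted
variable (k : Type) [Field k] (N : ℕ) (q : Fin N → Fin N → k) (lam : Fin N → k)

/-- The total space `A ⊗ ∧(V^*)` of the twisted cochain complex, in the `k`-basis
`(x*)^{∧β}` of `∧(V^*)` indexed by subsets `β ⊆ {1,…,N}`: an element is a finitely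
supported family of coefficients in `A`. -/
abbrev TwCochain := Finset (Fin N) →₀ QSA k N q

/-- The differential of the twisted complex,
`d*(x^α ⊗ (x*)^{∧β}) = Σ_{i : β_i = 0} (-1)^{β_1+⋯+β_i}
  [(∏_{s≤i} q_{s,i}^{β_s}) x_i x^α - λ_i (∏_{s≥i} q_{i,s}^{β_s}) x^α x_i] ⊗ (x*)^{∧(β+[i])}`. -/
def dtw : TwCochain k N q →ₗ[k] TwCochain k N q :=
  Finsupp.lsum k fun S : Finset (Fin N) =>
    ∑ i ∈ Sᶜ,
      (Finsupp.lsingle (insert i S)).comp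
        (((-1 : k) ^ (S.filter (fun s => s < i)).card) •
          ((∏ s ∈ S.filter (fun s => s ≤ i), q s i) • LinearMap.mulLeft k (X k N q i)
            - (lam i * ∏ s ∈ S.filter (fun s => i ≤ s), q i s) •
                LinearMap.mulRight k (X k N q i)))

/-- `ε(β,i) = (-1)^{β_1 + ⋯ + β_i}`. -/
def eps (β : Fin N → ℤ) (i : Fin N) : k :=
  (-1 : k) ^ (∑ s ∈ Finset.univ.filter (fun s => s ≤ i), β s)

/-- The scalar `Ω_g(α, β, i)` of the paper. -/
def Omega (α β : Fin N → ℤ) (i : Fin N) : k :=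
  if (∏ s, q i s ^ (α s - β s)) = lam i then 0
  else if β i ≠ 0 then 0
  else
    eps k N β i *
      ((∏ s ∈ Finset.univ.filter (fun s => s ≤ i), q i s ^ (α s - β s))
        - lam i * (∏ s ∈ Finset.univ.filter (fun s => i ≤ s), q s i ^ (α s - β s)))

/-- A subset `β ⊆ {1,…,N}`, considered as a `{0,1}`-vector in `ℤ^N`. -/
def betaZ (S : Finset (Fin N)) : Fin N → ℤ := fun s => if s ∈ S then 1 else 0

/-- `K_{g,γ}^m`: the span of the basis elements `x^α ⊗ (x*)^{∧β}` with `|β| = m` and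
`α - β = γ` (all degrees `m` assembled together). -/
def Kspan (γ : Fin N → ℤ) : Submodule k (TwCochain k N q) :=
  Submodule.span k {f | ∃ (α : Fin N → ℕ) (S : Finset (Fin N)),
    (fun s => (α s : ℤ)) - betaZ N S = γ ∧ f = Finsupp.single S (xpow k N q α)}

end Twisted

section Aux1
variable {k : Type} [Field k] {N : ℕ} {q : Fin N → Fin N → k}

lemma X_mul_X (i j : Fin N) :
    X k N q i * X k N q j = q i j • (X k N q j * X k N q i) := by
  have h := RingQuot.mkAlgHom_rel k (QRel.rel (k := k) (N := N) (q := q) i j)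
  simpa [X, map_mul] using h

lemma X_mul_pow (i j : Fin N) (n : ℕ) :
    X k N q i * X k N q j ^ n = (q i j ^ n) • (X k N q j ^ n * X k N q i) := by
  induction n with
  | zero => simp
  | succ n ih =>
    rw [pow_succ' (X k N q j), ← mul_assoc, X_mul_X, smul_mul_assoc, mul_assoc, ih,
      mul_smul_comm, smul_smul, ← mul_assoc, ← pow_succ', ← pow_succ']

lemma pow_mul_X (j i : Fin N) (n : ℕ) :
    X k N q j ^ n * X k N q i = (q j i ^ n) • (X k N q i * X k N q j ^ n) := by
  induction n with
  | zero => simp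
  | succ n ih =>
    rw [pow_succ (X k N q j), mul_assoc, X_mul_X, mul_smul_comm, ← mul_assoc, ih,
      smul_mul_assoc, smul_smul, mul_assoc, ← pow_succ, ← pow_succ']

lemma X_mul_listProd (i : Fin N) (g : Fin N → QSA k N q) (c : Fin N → k)
    (h : ∀ s, X k N q i * g s = c s • (g s * X k N q i)) :
    ∀ L : List (Fin N), X k N q i * (L.map g).prod
      = (L.map c).prod • ((L.map g).prod * X k N q i)
  | [] => by simp
  | s :: L => by
    rw [List.map_cons, List.map_cons, List.prod_cons, List.prod_cons, ← mul_assoc, h s,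
      smul_mul_assoc, mul_assoc, X_mul_listProd i g c h L, mul_smul_comm, smul_smul,
      ← mul_assoc]

lemma listProd_mul_X (i : Fin N) (g : Fin N → QSA k N q) (c : Fin N → k)
    (h : ∀ s, g s * X k N q i = c s • (X k N q i * g s)) :
    ∀ L : List (Fin N), (L.map g).prod * X k N q i
      = (L.map c).prod • (X k N q i * (L.map g).prod)
  | [] => by simp
  | s :: L => by
    rw [List.map_cons, List.map_cons, List.prod_cons, List.prod_cons, mul_assoc,
      listProd_mul_X i g c h L, mul_smul_comm, ← mul_assoc, h s, smul_mul_assoc, smul_smul,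
      mul_comm (c s), mul_assoc]

end Aux1
section Aux2
variable {k : Type} [Field k] {N : ℕ} {q : Fin N → Fin N → k}

lemma finRange_split (N : ℕ) (i : Fin N) :
    List.finRange N = (List.finRange N).take i.val
      ++ i :: (List.finRange N).drop (i.val + 1) := by
  conv_lhs => rw [← List.take_append_drop i.val (List.finRange N)]
  congr 1
  rw [List.drop_eq_getElem_cons (by simpa using i.isLt)]
  simp

lemma mem_take_finRange {t : ℕ} {s : Fin N} :
    s ∈ (List.finRange N).take t ↔ s.val < t := by
  rw [List.mem_take_iff_getElem]
  constructor
  · rintro ⟨m, hm, rfl⟩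
    simpa using lt_of_lt_of_le (lt_min_iff.mp hm).1 le_rfl
  · intro hs
    exact ⟨s.val, by simp [hs, s.isLt], by simp⟩

lemma mem_drop_finRange {t : ℕ} {s : Fin N} :
    s ∈ (List.finRange N).drop t ↔ t ≤ s.val := by
  have h := List.nodup_finRange N
  conv at h => rw [← List.take_append_drop t (List.finRange N)]
  rw [List.nodup_append] at h
  have hmem : s ∈ (List.finRange N).take t ∨ s ∈ (List.finRange N).drop t := by
    rw [← List.mem_append, List.take_append_drop]; exact List.mem_finRange s
  constructor
  · intro hd
    by_contra hlt
    exact h.2.2 _ (mem_take_finRange.mpr (not_le.mp hlt)) _ hd rfl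
  · intro ht
    rcases hmem with hm | hm
    · exact absurd (mem_take_finRange.mp hm) (not_lt.mpr ht)
    · exact hm

lemma toFinset_take_finRange (i : Fin N) :
    ((List.finRange N).take i.val).toFinset = Finset.univ.filter (· < i) := by
  ext s
  rw [List.mem_toFinset, mem_take_finRange]
  constructor
  · exact fun h => Finset.mem_filter.mpr ⟨Finset.mem_univ s, Fin.lt_def.mpr h⟩
  · exact fun h => Fin.lt_def.mp (Finset.mem_filter.mp h).2

lemma toFinset_drop_finRange (i : Fin N) :
    ((List.finRange N).drop (i.val + 1)).toFinset = Finset.univ.filter (i < ·) := by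
  ext s
  rw [List.mem_toFinset, mem_drop_finRange]
  constructor
  · intro h; exact Finset.mem_filter.mpr ⟨Finset.mem_univ s, Fin.lt_def.mpr (by omega)⟩
  · intro h; have := Fin.lt_def.mp (Finset.mem_filter.mp h).2; omega

lemma xpow_eq (α : Fin N → ℕ) (i : Fin N) :
    xpow k N q α = (((List.finRange N).take i.val).map fun s => X k N q s ^ α s).prod
      * (X k N q i ^ α i
        * (((List.finRange N).drop (i.val + 1)).map fun s => X k N q s ^ α s).prod) := by
  rw [xpow, List.ofFn_eq_map]
  conv_lhs => rw [finRange_split N i]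
  rw [List.map_append, List.prod_append, List.map_cons, List.prod_cons]

lemma map_take_single (α : Fin N → ℕ) (i : Fin N) (f : Fin N → ℕ → QSA k N q) :
    (((List.finRange N).take i.val).map fun s => f s ((α + Pi.single i 1 : Fin N → ℕ) s))
      = ((List.finRange N).take i.val).map fun s => f s (α s) := by
  apply List.map_congr_left
  intro s hs
  have : s ≠ i := fun h => by
    subst h; exact lt_irrefl _ (mem_take_finRange.mp hs)
  simp [Pi.add_apply, Pi.single_eq_of_ne this]

lemma map_drop_single (α : Fin N → ℕ) (i : Fin N) (f : Fin N → ℕ → QSA k N q) :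
    (((List.finRange N).drop (i.val + 1)).map fun s => f s ((α + Pi.single i 1 : Fin N → ℕ) s))
      = ((List.finRange N).drop (i.val + 1)).map fun s => f s (α s) := by
  apply List.map_congr_left
  intro s hs
  have : s ≠ i := fun h => by
    subst h
    exact absurd (mem_drop_finRange.mp hs) (by omega)
  simp [Pi.add_apply, Pi.single_eq_of_ne this]

lemma X_mul_xpow (i : Fin N) (α : Fin N → ℕ) :
    X k N q i * xpow k N q α
      = (∏ s ∈ Finset.univ.filter (· < i), q i s ^ α s) • xpow k N q (α + Pi.single i 1) := by
  rw [xpow_eq α i, xpow_eq (α + Pi.single i 1) i,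
    map_take_single α i (fun s n => X k N q s ^ n),
    map_drop_single α i (fun s n => X k N q s ^ n)]
  have happ : (α + Pi.single i 1 : Fin N → ℕ) i = α i + 1 := by simp
  rw [happ, ← mul_assoc,
    X_mul_listProd i (fun s => X k N q s ^ α s) (fun s => q i s ^ α s)
      (fun s => X_mul_pow i s (α s)),
    smul_mul_assoc, mul_assoc, ← mul_assoc (X k N q i), ← pow_succ']
  congr 1
  rw [← toFinset_take_finRange i, List.prod_toFinset _ (((List.nodup_finRange N)).sublist
    (List.take_sublist _ _))]

lemma xpow_mul_X (i : Fin N) (α : Fin N → ℕ) :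
    xpow k N q α * X k N q i
      = (∏ s ∈ Finset.univ.filter (i < ·), q s i ^ α s) • xpow k N q (α + Pi.single i 1) := by
  rw [xpow_eq α i, xpow_eq (α + Pi.single i 1) i,
    map_take_single α i (fun s n => X k N q s ^ n),
    map_drop_single α i (fun s n => X k N q s ^ n)]
  have happ : (α + Pi.single i 1 : Fin N → ℕ) i = α i + 1 := by simp
  rw [happ, mul_assoc, mul_assoc,
    listProd_mul_X i (fun s => X k N q s ^ α s) (fun s => q s i ^ α s)
      (fun s => pow_mul_X s i (α s)),
    mul_smul_comm, mul_smul_comm, ← mul_assoc (X k N q i ^ α i), ← pow_succ]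
  congr 1
  rw [← toFinset_drop_finRange i, List.prod_toFinset _ (((List.nodup_finRange N)).sublist
    (List.drop_sublist _ _))]

end Aux2
section Rep
variable (k : Type) [Field k] (N : ℕ) (q : Fin N → Fin N → k)

/-- The representation space `k[y_1,…,y_N]` (as a vector space). -/
abbrev RepM := (Fin N → ℕ) →₀ k

/-- The action of `x_i` on the representation space. -/
def Trep (i : Fin N) : RepM k N →ₗ[k] RepM k N :=
  Finsupp.lsum k fun α : Fin N → ℕ =>
    (∏ s ∈ Finset.univ.filter (· < i), q i s ^ α s) • Finsupp.lsingle (α + Pi.single i 1)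

lemma Trep_single (i : Fin N) (α : Fin N → ℕ) (c : k) :
    Trep k N q i (Finsupp.single α c)
      = (∏ s ∈ Finset.univ.filter (· < i), q i s ^ α s)
          • Finsupp.single (α + Pi.single i 1) c := by
  simp [Trep]

lemma coef_shift (i j : Fin N) (α : Fin N → ℕ) :
    (∏ s ∈ Finset.univ.filter (· < i), q i s ^ (α + Pi.single j 1 : Fin N → ℕ) s)
      = (∏ s ∈ Finset.univ.filter (· < i), q i s ^ α s) * (if j < i then q i j else 1) := by
  have h1 : ∀ s : Fin N, q i s ^ (α + Pi.single j 1 : Fin N → ℕ) s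
      = q i s ^ α s * (if s = j then q i s else 1) := by
    intro s
    rw [Pi.add_apply, Pi.single_apply, pow_add]
    congr 1
    split <;> simp
  rw [Finset.prod_congr rfl fun s _ => h1 s, Finset.prod_mul_distrib]
  congr 1
  rw [Finset.prod_ite_eq']
  congr 1
  simp
end Rep

section Rep2
variable {k : Type} [Field k] {N : ℕ} {q : Fin N → Fin N → k}
variable (hq0 : ∀ i j, q i j ≠ 0) (hq1 : ∀ i, q i i = 1)
  (hqinv : ∀ i j, q j i = (q i j)⁻¹)
include hq0 hq1 hqinv

lemma Trep_rel (i j : Fin N) :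
    Trep k N q i * Trep k N q j = q i j • (Trep k N q j * Trep k N q i) := by
  apply Finsupp.lhom_ext
  intro α c
  rw [Module.End.mul_apply, LinearMap.smul_apply, Module.End.mul_apply,
    Trep_single, map_smul, Trep_single, Trep_single, map_smul, Trep_single,
    coef_shift, coef_shift]
  rw [smul_smul, smul_smul, smul_smul]
  rw [add_right_comm α (Pi.single j 1) (Pi.single i 1)]
  congr 1
  rcases lt_trichotomy i j with h | h | h
  · rw [if_neg (asymm h), if_pos h, hqinv i j]
    field_simp
    rw [mul_div_cancel_right₀ _ (hq0 i j)]
  · subst h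
    rw [if_neg (lt_irrefl i), hq1 i]
    ring
  · rw [if_pos h, if_neg (asymm h)]
    ring

/-- The representation `S_q(V) → End(k[y])`. -/
def Phi : QSA k N q →ₐ[k] Module.End k (RepM k N) :=
  RingQuot.liftAlgHom k ⟨FreeAlgebra.lift k (Trep k N q), by
    rintro a b ⟨i, j⟩
    simp only [map_mul, map_smul, FreeAlgebra.lift_ι_apply]
    exact Trep_rel hq0 hq1 hqinv i j⟩

lemma Phi_X (i : Fin N) : Phi hq0 hq1 hqinv (X k N q i) = Trep k N q i := by
  rw [X, Phi, RingQuot.liftAlgHom_mkAlgHom_apply, FreeAlgebra.lift_ι_apply]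

omit hq0 hq1 hqinv in
lemma Trep_pow_single (i : Fin N) (n : ℕ) (γ : Fin N → ℕ) (c : k)
    (h : ∀ u : Fin N, u < i → γ u = 0) :
    (Trep k N q i ^ n) (Finsupp.single γ c)
      = Finsupp.single (γ + Pi.single i n) c := by
  induction n with
  | zero => simp
  | succ n ih =>
    rw [pow_succ', Module.End.mul_apply, ih, Trep_single]
    have hc : (∏ s ∈ Finset.univ.filter (· < i),
        q i s ^ (γ + Pi.single i n : Fin N → ℕ) s) = 1 := by
      apply Finset.prod_eq_one
      intro s hs
      have hsi : s < i := (Finset.mem_filter.mp hs).2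
      rw [Pi.add_apply, h s hsi, Pi.single_eq_of_ne (ne_of_lt hsi)]
      simp
    rw [hc, one_smul, add_assoc, ← Pi.single_add]

lemma Phi_list : ∀ (L : List (Fin N)), L.Pairwise (· < ·) → ∀ (α β : Fin N → ℕ),
    (∀ s ∈ L, ∀ u : Fin N, u < s → β u = 0) →
    Phi hq0 hq1 hqinv ((L.map fun s => X k N q s ^ α s).prod) (Finsupp.single β 1)
      = Finsupp.single (β + fun u => if u ∈ L then α u else 0) 1
  | [], _, α, β, _ => by
    have hβ : (β + fun u => if u ∈ ([] : List (Fin N)) then α u else 0) = β := by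
      funext u; simp
    rw [List.map_nil, List.prod_nil, map_one, hβ]
    rfl
  | s :: L, hp, α, β, h => by
    have hpL := List.pairwise_cons.mp hp
    rw [List.map_cons, List.prod_cons, map_mul, Module.End.mul_apply,
      Phi_list L hpL.2 α β (fun t ht u hu => h t (List.mem_cons_of_mem s ht) u hu),
      map_pow, Phi_X, Trep_pow_single]
    · congr 1
      funext u
      rcases eq_or_ne u s with rfl | hus
      · have hsL : u ∉ L := fun hm => lt_irrefl u (hpL.1 u hm)
        simp [hsL]
      · simp [Pi.single_eq_of_ne hus, List.mem_cons, hus]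
    · intro u hu
      have hβ : β u = 0 := h s (List.mem_cons_self) u hu
      have hL : u ∉ L := fun hm => absurd (hpL.1 u hm) (asymm hu)
      simp [hβ, hL]

/-- Evaluation of the representation at `1 = y^0`. -/
def theta : QSA k N q →ₗ[k] RepM k N where
  toFun a := Phi hq0 hq1 hqinv a (Finsupp.single 0 1)
  map_add' a b := by simp
  map_smul' c a := by simp

lemma theta_xpow (α : Fin N → ℕ) :
    theta hq0 hq1 hqinv (xpow k N q α) = Finsupp.single α 1 := by
  show Phi hq0 hq1 hqinv (xpow k N q α) (Finsupp.single 0 1) = _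
  rw [xpow, List.ofFn_eq_map,
    Phi_list hq0 hq1 hqinv _ (List.pairwise_lt_finRange N) α 0 (by intros; rfl)]
  congr 1
  funext u
  simp [List.mem_finRange]

end Rep2

section Span
variable {k : Type} [Field k] {N : ℕ} {q : Fin N → Fin N → k}

lemma xpow_zero' : xpow k N q 0 = 1 := by
  rw [xpow]
  apply List.prod_eq_one
  intro x hx
  rw [List.mem_ofFn] at hx
  obtain ⟨i, rfl⟩ := hx
  simp

lemma span_xpow_top : Submodule.span k (Set.range (xpow k N q)) = ⊤ := by
  set W := Submodule.span k (Set.range (xpow k N q)) with hW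
  have h1 : (1 : QSA k N q) ∈ W := by
    rw [← xpow_zero' (q := q)]
    exact Submodule.subset_span ⟨0, rfl⟩
  have hX : ∀ (i : Fin N) (w : QSA k N q), w ∈ W → X k N q i * w ∈ W := by
    intro i w hw
    induction hw using Submodule.span_induction with
    | mem x hx =>
      obtain ⟨α, rfl⟩ := hx
      rw [X_mul_xpow]
      exact Submodule.smul_mem _ _ (Submodule.subset_span ⟨_, rfl⟩)
    | zero => rw [mul_zero]; exact zero_mem _
    | add x y _ _ hx hy => rw [mul_add]; exact add_mem hx hy
    | smul c x _ hx => rw [mul_smul_comm]; exact Submodule.smul_mem _ _ hx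
  have hadj : Algebra.adjoin k (Set.range (X k N q)) = ⊤ := by
    have hr : Set.range (X k N q)
        = (RingQuot.mkAlgHom k (QRel k N q)) '' (Set.range (FreeAlgebra.ι k)) := by
      rw [← Set.range_comp]; rfl
    rw [hr, ← AlgHom.map_adjoin, FreeAlgebra.adjoin_range_ι, Algebra.map_top,
      (AlgHom.range_eq_top _).mpr (RingQuot.mkAlgHom_surjective k _)]
  have hmul : ∀ a w : QSA k N q, w ∈ W → a * w ∈ W := by
    intro a
    have ha : a ∈ Algebra.adjoin k (Set.range (X k N q)) := hadj ▸ Algebra.mem_top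
    induction ha using Algebra.adjoin_induction with
    | mem x hx =>
      obtain ⟨i, rfl⟩ := hx
      exact fun w hw => hX i w hw
    | algebraMap r =>
      intro w hw
      rw [← Algebra.smul_def]
      exact Submodule.smul_mem _ _ hw
    | add x y _ _ ihx ihy =>
      intro w hw
      rw [add_mul]
      exact add_mem (ihx w hw) (ihy w hw)
    | mul x y _ _ ihx ihy =>
      intro w hw
      rw [mul_assoc]
      exact ihx _ (ihy w hw)
  rw [eq_top_iff]
  intro a _
  simpa using hmul a 1 h1

variable (hq0 : ∀ i j, q i j ≠ 0) (hq1 : ∀ i, q i i = 1)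
  (hqinv : ∀ i j, q j i = (q i j)⁻¹)

lemma theta_inj : Function.Injective (theta hq0 hq1 hqinv) := by
  rw [← LinearMap.ker_eq_bot, Submodule.eq_bot_iff]
  intro a ha
  rw [LinearMap.mem_ker] at ha
  have hmem : a ∈ Submodule.span k (Set.range (xpow k N q)) := by
    rw [span_xpow_top]; exact Submodule.mem_top
  rw [Finsupp.mem_span_range_iff_exists_finsupp] at hmem
  obtain ⟨c, hc⟩ := hmem
  have hth : theta hq0 hq1 hqinv a = c := by
    rw [← hc, map_finsuppSum]
    have : ∀ α ∈ c.support, theta hq0 hq1 hqinv (c α • xpow k N q α)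
        = Finsupp.single α (c α) := by
      intro α _
      rw [map_smul, theta_xpow, Finsupp.smul_single', mul_one]
    rw [Finsupp.sum_congr this]
    exact Finsupp.sum_single c
  have hc0 : c = 0 := hth.symm.trans ha
  rw [← hc, hc0, Finsupp.sum_zero_index]

end Span

section Formula
variable {k : Type} [Field k] {N : ℕ} {q : Fin N → Fin N → k} {lam : Fin N → k}

lemma filter_le_eq_insert (i : Fin N) :
    (Finset.univ.filter (· ≤ i) : Finset (Fin N))
      = insert i (Finset.univ.filter (· < i)) := by
  ext s
  simp only [Finset.mem_filter, Finset.mem_univ, true_and, Finset.mem_insert]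
  constructor
  · intro h
    rcases eq_or_lt_of_le h with h | h
    · exact Or.inl h
    · exact Or.inr h
  · rintro (rfl | h)
    · exact le_rfl
    · exact le_of_lt h

lemma filter_ge_eq_insert (i : Fin N) :
    (Finset.univ.filter (i ≤ ·) : Finset (Fin N))
      = insert i (Finset.univ.filter (i < ·)) := by
  ext s
  simp only [Finset.mem_filter, Finset.mem_univ, true_and, Finset.mem_insert]
  constructor
  · intro h
    rcases eq_or_lt_of_le h with h | h
    · exact Or.inl h.symm
    · exact Or.inr h
  · rintro (rfl | h)
    · exact le_rfl
    · exact le_of_lt h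

lemma i_not_mem_lt (i : Fin N) : i ∉ Finset.univ.filter (· < i) := by simp

lemma i_not_mem_gt (i : Fin N) : i ∉ Finset.univ.filter (i < ·) := by simp

variable (hq0 : ∀ i j, q i j ≠ 0) (hq1 : ∀ i, q i i = 1)
  (hqinv : ∀ i j, q j i = (q i j)⁻¹)

include hq0 in
lemma zfac1 (i s : Fin N) (a : ℕ) (S : Finset (Fin N)) :
    q i s ^ ((a : ℤ) - betaZ N S s)
      = q i s ^ a * (if s ∈ S then (q i s)⁻¹ else 1) := by
  simp only [betaZ]
  split
  · rw [zpow_sub₀ (hq0 i s), zpow_one, zpow_natCast, div_eq_mul_inv]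
  · rw [sub_zero, zpow_natCast, mul_one]

include hq0 hqinv in
lemma zfac2 (i s : Fin N) (a : ℕ) (S : Finset (Fin N)) :
    q s i ^ ((a : ℤ) - betaZ N S s)
      = q s i ^ a * (if s ∈ S then q i s else 1) := by
  have hne : q s i ≠ 0 := by
    rw [hqinv i s]; exact inv_ne_zero (hq0 i s)
  simp only [betaZ]
  split
  · rw [zpow_sub₀ hne, zpow_one, zpow_natCast, div_eq_mul_inv, hqinv i s, inv_inv]
  · rw [sub_zero, zpow_natCast, mul_one]

include hq0 hq1 hqinv in
lemma A1_eq (α : Fin N → ℕ) (S : Finset (Fin N)) (i : Fin N) (hi : i ∉ S) :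
    (∏ s ∈ Finset.univ.filter (· ≤ i), q i s ^ ((α s : ℤ) - betaZ N S s))
      = (∏ s ∈ S.filter (· ≤ i), q s i)
          * (∏ s ∈ Finset.univ.filter (· < i), q i s ^ α s) := by
  rw [filter_le_eq_insert, Finset.prod_insert (i_not_mem_lt i)]
  have hii : q i i ^ ((α i : ℤ) - betaZ N S i) = 1 := by rw [hq1]; exact one_zpow _
  rw [hii, one_mul, Finset.prod_congr rfl fun s _ => zfac1 hq0 i s (α s) S,
    Finset.prod_mul_distrib, mul_comm]
  congr 1
  rw [← Finset.prod_filter]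
  have hset : (Finset.univ.filter (· < i)).filter (· ∈ S) = S.filter (· ≤ i) := by
    ext s
    simp only [Finset.mem_filter, Finset.mem_univ, true_and]
    constructor
    · rintro ⟨h1, h2⟩; exact ⟨h2, le_of_lt h1⟩
    · rintro ⟨h1, h2⟩
      refine ⟨lt_of_le_of_ne h2 ?_, h1⟩
      rintro rfl; exact hi h1
  rw [hset]
  exact Finset.prod_congr rfl fun s _ => (hqinv i s).symm

include hq0 hq1 hqinv in
lemma A2_eq (α : Fin N → ℕ) (S : Finset (Fin N)) (i : Fin N) (hi : i ∉ S) :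
    (∏ s ∈ Finset.univ.filter (i ≤ ·), q s i ^ ((α s : ℤ) - betaZ N S s))
      = (∏ s ∈ S.filter (i ≤ ·), q i s)
          * (∏ s ∈ Finset.univ.filter (i < ·), q s i ^ α s) := by
  rw [filter_ge_eq_insert, Finset.prod_insert (i_not_mem_gt i)]
  have hii : q i i ^ ((α i : ℤ) - betaZ N S i) = 1 := by rw [hq1]; exact one_zpow _
  rw [hii, one_mul, Finset.prod_congr rfl fun s _ => zfac2 hq0 hqinv i s (α s) S,
    Finset.prod_mul_distrib, mul_comm]
  congr 1
  rw [← Finset.prod_filter]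
  have hset : (Finset.univ.filter (i < ·)).filter (· ∈ S) = S.filter (i ≤ ·) := by
    ext s
    simp only [Finset.mem_filter, Finset.mem_univ, true_and]
    constructor
    · rintro ⟨h1, h2⟩; exact ⟨h2, le_of_lt h1⟩
    · rintro ⟨h1, h2⟩
      refine ⟨lt_of_le_of_ne h2 ?_, h1⟩
      rintro rfl; exact hi h1
  rw [hset]

include hq0 hq1 hqinv in
lemma A1_sub_A2 (α : Fin N → ℕ) (S : Finset (Fin N)) (i : Fin N)
    (h : (∏ s, q i s ^ ((α s : ℤ) - betaZ N S s)) = lam i) :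
    (∏ s ∈ Finset.univ.filter (· ≤ i), q i s ^ ((α s : ℤ) - betaZ N S s))
      - lam i * (∏ s ∈ Finset.univ.filter (i ≤ ·), q s i ^ ((α s : ℤ) - betaZ N S s))
      = 0 := by
  set c : Fin N → ℤ := fun s => (α s : ℤ) - betaZ N S s with hc
  have hsplit : (∏ s, q i s ^ c s)
      = (∏ s ∈ Finset.univ.filter (· ≤ i), q i s ^ c s)
          * (∏ s ∈ Finset.univ.filter (i < ·), q i s ^ c s) := by
    rw [← Finset.prod_filter_mul_prod_filter_not Finset.univ (· ≤ i)]
    congr 1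
    apply Finset.prod_congr _ fun _ _ => rfl
    ext s
    simp [not_le]
  have hA2 : (∏ s ∈ Finset.univ.filter (i ≤ ·), q s i ^ c s)
      = (∏ s ∈ Finset.univ.filter (i < ·), q i s ^ c s)⁻¹ := by
    rw [filter_ge_eq_insert, Finset.prod_insert (i_not_mem_gt i), hq1, one_zpow, one_mul,
      ← Finset.prod_inv_distrib]
    apply Finset.prod_congr rfl
    intro s _
    rw [hqinv i s, inv_zpow]
  have hne : (∏ s ∈ Finset.univ.filter (i < ·), q i s ^ c s) ≠ 0 :=
    Finset.prod_ne_zero_iff.mpr fun s _ => zpow_ne_zero _ (hq0 i s)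
  rw [hA2, ← h, hsplit, mul_assoc, mul_inv_cancel₀ hne, mul_one, sub_self]

lemma Omega_zero_of_mem (αZ : Fin N → ℤ) (S : Finset (Fin N)) (i : Fin N) (hi : i ∈ S) :
    Omega k N q lam αZ (betaZ N S) i = 0 := by
  rw [Omega]
  split
  · rfl
  · rw [if_pos (by simp [betaZ, hi])]

include hq0 hq1 hqinv in
lemma Omega_of_not_mem (α : Fin N → ℕ) (S : Finset (Fin N)) (i : Fin N) (hi : i ∉ S) :
    Omega k N q lam (fun s => (α s : ℤ)) (betaZ N S) i
      = eps k N (betaZ N S) i *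
          ((∏ s ∈ S.filter (· ≤ i), q s i)
              * (∏ s ∈ Finset.univ.filter (· < i), q i s ^ α s)
            - (lam i * ∏ s ∈ S.filter (i ≤ ·), q i s)
              * (∏ s ∈ Finset.univ.filter (i < ·), q s i ^ α s)) := by
  have hrw : (∏ s ∈ S.filter (· ≤ i), q s i)
        * (∏ s ∈ Finset.univ.filter (· < i), q i s ^ α s)
      - (lam i * ∏ s ∈ S.filter (i ≤ ·), q i s)
        * (∏ s ∈ Finset.univ.filter (i < ·), q s i ^ α s)
      = (∏ s ∈ Finset.univ.filter (· ≤ i), q i s ^ ((α s : ℤ) - betaZ N S s))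
        - lam i * (∏ s ∈ Finset.univ.filter (i ≤ ·), q s i ^ ((α s : ℤ) - betaZ N S s)) := by
    rw [A1_eq hq0 hq1 hqinv α S i hi, A2_eq hq0 hq1 hqinv α S i hi, mul_assoc]
  rw [Omega, hrw]
  split
  · next h => rw [A1_sub_A2 hq0 hq1 hqinv α S i h, mul_zero]
  · rw [if_neg (by simp [betaZ, hi])]

lemma eps_eq (S : Finset (Fin N)) (i : Fin N) (hi : i ∉ S) :
    eps k N (betaZ N S) i = (-1 : k) ^ (S.filter (· < i)).card := by
  rw [eps]
  have hset : (Finset.univ.filter (· ≤ i)).filter (· ∈ S) = S.filter (· < i) := by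
    ext s
    simp only [Finset.mem_filter, Finset.mem_univ, true_and]
    constructor
    · rintro ⟨h1, h2⟩
      refine ⟨h2, lt_of_le_of_ne h1 ?_⟩
      rintro rfl; exact hi h2
    · rintro ⟨h1, h2⟩; exact ⟨le_of_lt h2, h1⟩
  have hsum : (∑ s ∈ Finset.univ.filter (· ≤ i), betaZ N S s)
      = ((S.filter (· < i)).card : ℤ) := by
    simp only [betaZ]
    rw [Finset.sum_boole, hset]
  rw [hsum, zpow_natCast]

include hq0 hq1 hqinv in
lemma dtw_single (α : Fin N → ℕ) (S : Finset (Fin N)) :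
    dtw k N q lam (Finsupp.single S (xpow k N q α))
      = ∑ i : Fin N,
          Omega k N q lam (fun s => (α s : ℤ)) (betaZ N S) i •
            Finsupp.single (insert i S) (xpow k N q (α + Pi.single i 1)) := by
  rw [dtw, Finsupp.lsum_single, LinearMap.sum_apply]
  symm
  rw [← Finset.sum_subset (Finset.subset_univ Sᶜ) (fun x _ hx => by
    rw [Omega_zero_of_mem _ S x (by simpa using hx), zero_smul])]
  apply Finset.sum_congr rfl
  intro i hi
  have hiS : i ∉ S := Finset.mem_compl.mp hi
  rw [LinearMap.comp_apply, LinearMap.smul_apply, LinearMap.sub_apply, LinearMap.smul_apply,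
    LinearMap.smul_apply, LinearMap.mulLeft_apply, LinearMap.mulRight_apply,
    X_mul_xpow, xpow_mul_X, smul_smul, smul_smul, ← sub_smul, smul_smul, map_smul,
    Omega_of_not_mem hq0 hq1 hqinv α S i hiS, eps_eq S i hiS]
  rfl

end Formula

section Assemble
variable {k : Type} [Field k] {N : ℕ} {q : Fin N → Fin N → k}

/-- The set of pair-indices with invariant `γ`. -/
def Iset (N : ℕ) (γ : Fin N → ℤ) : Set (Finset (Fin N) × (Fin N → ℕ)) :=
  {p | (fun s => (p.2 s : ℤ)) - betaZ N p.1 = γ}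

variable (hq0 : ∀ i j, q i j ≠ 0) (hq1 : ∀ i, q i i = 1)
  (hqinv : ∀ i j, q j i = (q i j)⁻¹)

/-- The comparison map of the twisted complex into a plain `Finsupp`. -/
def Emap : TwCochain k N q →ₗ[k] ((Finset (Fin N) × (Fin N → ℕ)) →₀ k) :=
  (Finsupp.finsuppProdLEquiv k).symm.toLinearMap.comp
    (Finsupp.mapRange.linearMap (theta hq0 hq1 hqinv))

lemma Emap_inj : Function.Injective (Emap hq0 hq1 hqinv) := by
  intro x y hxy
  have h1 : Finsupp.mapRange.linearMap (theta hq0 hq1 hqinv) x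
      = Finsupp.mapRange.linearMap (theta hq0 hq1 hqinv) y :=
    (Finsupp.finsuppProdLEquiv k).symm.injective hxy
  simp only [Finsupp.mapRange.linearMap_apply] at h1
  exact Finsupp.mapRange_injective _ (map_zero _) (theta_inj hq0 hq1 hqinv) h1

lemma Emap_single (S : Finset (Fin N)) (α : Fin N → ℕ) :
    Emap hq0 hq1 hqinv (Finsupp.single S (xpow k N q α)) = Finsupp.single (S, α) 1 := by
  rw [Emap, LinearMap.comp_apply]
  simp only [Finsupp.mapRange.linearMap_apply, Finsupp.mapRange_single, theta_xpow,
    LinearEquiv.coe_coe]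
  ext p
  erw [Finsupp.curryLinearEquiv_symm_apply_apply]
  rcases p with ⟨a, b⟩
  rw [Finsupp.single_apply]
  by_cases h1 : S = a
  · subst h1
    rw [if_pos rfl, Finsupp.single_apply, Finsupp.single_apply]
    by_cases h2 : α = b
    · simp [h2]
    · rw [if_neg h2, if_neg (by simp [Prod.ext_iff, h2])]
  · rw [if_neg h1, Finsupp.single_apply, if_neg (by simp [Prod.ext_iff, h1]),
      Finsupp.coe_zero, Pi.zero_apply]

lemma Kspan_le_comap (γ : Fin N → ℤ) :
    Kspan k N q γ ≤ Submodule.comap (Emap hq0 hq1 hqinv)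
      (Finsupp.supported k k (Iset N γ)) := by
  rw [Kspan, Submodule.span_le]
  rintro f ⟨α, S, hγ, rfl⟩
  simp only [SetLike.mem_coe, Submodule.mem_comap]
  rw [Emap_single, Finsupp.mem_supported]
  intro p hp
  have hp' : p = (S, α) :=
    Finset.mem_singleton.mp (Finsupp.support_single_subset (Finset.mem_coe.mp hp))
  subst hp'
  exact hγ

end Assemble
/-- Formula (9) of the paper and Lemma 4.4: the differential of the twisted complex is
`d*(x^α ⊗ (x*)^{∧β}) = Σ_{i=1}^N Ω_g(α,β,i) x^{α+[i]} ⊗ (x*)^{∧(β+[i])}`, and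
consequently the twisted complex is the direct sum, over
`γ ∈ (ℕ ∪ {-1})^N`, of the subcomplexes `K_{g,γ}^•`. -/
theorem stmt9 (k : Type) [Field k] [CharZero k] (N : ℕ) (hN : 0 < N)
    (q : Fin N → Fin N → k) (hq0 : ∀ i j, q i j ≠ 0) (hq1 : ∀ i, q i i = 1)
    (hqinv : ∀ i j, q j i = (q i j)⁻¹)
    (lam : Fin N → k) (hlam : ∀ i, lam i ≠ 0) :
    -- the differential in terms of the scalars `Ω_g`:
    (∀ (α : Fin N → ℕ) (S : Finset (Fin N)),
      dtw k N q lam (Finsupp.single S (xpow k N q α)) =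
        ∑ i : Fin N,
          Omega k N q lam (fun s => (α s : ℤ)) (betaZ N S) i •
            Finsupp.single (insert i S) (xpow k N q (α + Pi.single i 1))) ∧
    -- each `K_{g,γ}` is a subcomplex:
    (∀ γ : {γ : Fin N → ℤ // ∀ i, -1 ≤ γ i},
      (Kspan k N q γ.1).map (dtw k N q lam) ≤ Kspan k N q γ.1) ∧
    -- and the complex is their (internal) direct sum:
    iSupIndep (fun γ : {γ : Fin N → ℤ // ∀ i, -1 ≤ γ i} => Kspan k N q γ.1) ∧
    (⨆ γ : {γ : Fin N → ℤ // ∀ i, -1 ≤ γ i}, Kspan k N q γ.1) = ⊤ := by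
  have hform : ∀ (α : Fin N → ℕ) (S : Finset (Fin N)),
      dtw k N q lam (Finsupp.single S (xpow k N q α)) =
        ∑ i : Fin N,
          Omega k N q lam (fun s => (α s : ℤ)) (betaZ N S) i •
            Finsupp.single (insert i S) (xpow k N q (α + Pi.single i 1)) :=
    fun α S => dtw_single hq0 hq1 hqinv α S
  refine ⟨hform, ?_, ?_, ?_⟩
  · -- subcomplex
    intro γ
    conv_lhs => rw [Kspan]
    rw [Submodule.map_span, Submodule.span_le]
    rintro g ⟨f, ⟨α, S, hγ, rfl⟩, rfl⟩
    rw [SetLike.mem_coe, hform α S]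
    apply Submodule.sum_mem
    intro i _
    by_cases hi : i ∈ S
    · rw [Omega_zero_of_mem _ S i hi, zero_smul]
      exact zero_mem _
    · apply Submodule.smul_mem
      apply Submodule.subset_span
      refine ⟨α + Pi.single i 1, insert i S, ?_, rfl⟩
      rw [← hγ]
      funext s
      simp only [Pi.sub_apply, betaZ, Finset.mem_insert]
      rcases eq_or_ne s i with rfl | hsi
      · simp [hi]
      · simp [hsi, Pi.single_eq_of_ne hsi]
  · -- independence
    rw [iSupIndep_def]
    intro γ
    rw [Submodule.disjoint_def]
    intro x hx hx'
    have h1 : Emap hq0 hq1 hqinv x ∈ Finsupp.supported k k (Iset N γ.1) :=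
      Kspan_le_comap hq0 hq1 hqinv γ.1 hx
    have h2 : Emap hq0 hq1 hqinv x ∈ Finsupp.supported k k ((Iset N γ.1)ᶜ) := by
      have hle : (⨆ (j : {γ : Fin N → ℤ // ∀ i, -1 ≤ γ i}) (_ : j ≠ γ), Kspan k N q j.1)
          ≤ Submodule.comap (Emap hq0 hq1 hqinv)
              (Finsupp.supported k k ((Iset N γ.1)ᶜ)) := by
        apply iSup_le
        intro j
        apply iSup_le
        intro hj
        refine le_trans (Kspan_le_comap hq0 hq1 hqinv j.1)
          (Submodule.comap_mono (Finsupp.supported_mono ?_))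
        intro p hp hpγ
        exact hj (Subtype.ext (hp.symm.trans hpγ))
      exact hle hx'
    have h0 : Emap hq0 hq1 hqinv x = 0 :=
      Submodule.disjoint_def.mp
        (Finsupp.disjoint_supported_supported disjoint_compl_right) _ h1 h2
    exact Emap_inj hq0 hq1 hqinv (by rw [h0, map_zero])
  · -- sup eq top
    rw [eq_top_iff]
    intro f _
    have hsingle : ∀ (S : Finset (Fin N)) (b : QSA k N q),
        Finsupp.single S b ∈ ⨆ γ : {γ : Fin N → ℤ // ∀ i, -1 ≤ γ i}, Kspan k N q γ.1 := by
      intro S b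
      have hb : b ∈ Submodule.span k (Set.range (xpow k N q)) := by
        rw [span_xpow_top]; exact Submodule.mem_top
      induction hb using Submodule.span_induction with
      | mem x hx =>
        obtain ⟨α, rfl⟩ := hx
        refine Submodule.mem_iSup_of_mem ⟨(fun s => (α s : ℤ)) - betaZ N S, ?_⟩ ?_
        · intro i
          simp only [Pi.sub_apply, betaZ]
          split <;> omega
        · exact Submodule.subset_span ⟨α, S, rfl, rfl⟩
      | zero =>
        rw [Finsupp.single_zero]
        exact zero_mem _
      | add x y _ _ hx hy =>
        rw [Finsupp.single_add]
        exact add_mem hx hy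
      | smul c x _ hx =>
        rw [← Finsupp.smul_single]
        exact Submodule.smul_mem _ _ hx
    rw [← Finsupp.sum_single f]
    exact Submodule.sum_mem _ fun S _ => hsingle S (f S)
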